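/- The function $g(x) = x \sqrt{\log(1 + 1/x^2)}$, defined for $x > 0$ and extended by $g(0) = 0$, is monotone increasing on $[0, \infty)$. -/

import Mathlib

open Real

noncomputable def haux (t : ℝ) : ℝ := t * (Real.log (t + 1) - Real.log t)

lemma haux_hasDerivAt {t : ℝ} (ht : 0 < t) :
    HasDerivAt haux ((Real.log (t+1) - Real.log t) + t * (1/(t+1) - 1/t)) t := by
  have h1 : HasDerivAt (fun s : ℝ => s + 1) 1 t := (hasDerivAt_id t).add_const 1
  have h2 : HasDerivAt (fun s : ℝ => Real.log (s+1)) (1/(t+1)) t := by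
    simpa using h1.log (by linarith)
  have h3 : HasDerivAt Real.log (1/t) t := by
    simpa [one_div] using Real.hasDerivAt_log ht.ne'
  have := (hasDerivAt_id t).mul (h2.sub h3)
  have e : (Real.log (t+1) - Real.log t) + t * (1/(t+1) - 1/t) = 1 * ((fun s => log (s + 1)) - log) t + id t * (1 / (t + 1) - 1 / t) := by
    simp only [Pi.sub_apply, id_eq, one_mul]
  rw [e]; exact this

lemma haux_deriv_nonneg {t : ℝ} (ht : 0 < t) :
    0 ≤ (Real.log (t+1) - Real.log t) + t * (1/(t+1) - 1/t) := by
  have key : Real.log (t/(t+1)) ≤ t/(t+1) - 1 :=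
    Real.log_le_sub_one_of_pos (by positivity)
  rw [Real.log_div ht.ne' (by linarith)] at key
  have e1 : t * (1/(t+1) - 1/t) = -(1/(t+1)) := by field_simp; ring
  have e2 : t/(t+1) - 1 = -(1/(t+1)) := by field_simp; ring
  rw [e2] at key
  linarith

lemma haux_mono : MonotoneOn haux (Set.Ioi 0) := by
  have hint : interior (Set.Ioi (0:ℝ)) = Set.Ioi 0 := interior_Ioi
  apply monotoneOn_of_deriv_nonneg (convex_Ioi 0)
  · intro x hx
    exact ((haux_hasDerivAt hx).continuousAt).continuousWithinAt
  · rw [hint]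
    intro x hx
    exact (haux_hasDerivAt hx).differentiableAt.differentiableWithinAt
  · rw [hint]
    intro x hx
    rw [(haux_hasDerivAt hx).deriv]
    exact haux_deriv_nonneg hx

lemma haux_nonneg {t : ℝ} (ht : 0 ≤ t) : 0 ≤ haux t := by
  rcases eq_or_lt_of_le ht with rfl | ht
  · simp [haux]
  · have : Real.log t ≤ Real.log (t+1) := Real.log_le_log ht (by linarith)
    have := ht.le
    unfold haux; nlinarith

lemma f_eq {x : ℝ} (hx : 0 ≤ x) :
    x * Real.sqrt (Real.log (1 + 1/x^2)) = Real.sqrt (haux (x^2)) := by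
  rcases eq_or_lt_of_le hx with rfl | hx
  · simp [haux]
  · have hx2 : (0:ℝ) < x^2 := by positivity
    have hl : Real.log (1 + 1/x^2) = Real.log (x^2+1) - Real.log (x^2) := by
      rw [← Real.log_div (by positivity) hx2.ne']
      congr 1; field_simp
    rw [hl, haux]
    rw [← Real.sqrt_sq hx.le]
    rw [← Real.sqrt_mul (by positivity)]
    rw [Real.sqrt_sq hx.le]

lemma log_one_add_le {u : ℝ} (hu : 0 ≤ u) : Real.log (1 + u) ≤ 2 * Real.sqrt u := by
  have h1 : Real.log (Real.sqrt (1+u)) ≤ Real.sqrt (1+u) - 1 :=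
    Real.log_le_sub_one_of_pos (Real.sqrt_pos.mpr (by linarith))
  have h2 : Real.sqrt (1+u) ≤ 1 + Real.sqrt u := by
    rw [show (1:ℝ) + Real.sqrt u = Real.sqrt ((1 + Real.sqrt u)^2) by
      rw [Real.sqrt_sq (by positivity)]]
    apply Real.sqrt_le_sqrt
    nlinarith [Real.sq_sqrt hu, Real.sqrt_nonneg u]
  rw [Real.log_sqrt (by linarith)] at h1
  linarith

theorem monotone_x_sqrt_log :
    MonotoneOn (fun x : ℝ => x * Real.sqrt (Real.log (1 + 1 / x ^ 2))) (Set.Ici 0) ∧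
      Filter.Tendsto (fun x : ℝ => x * Real.sqrt (Real.log (1 + 1 / x ^ 2)))
        (nhdsWithin 0 (Set.Ioi 0)) (nhds 0) := by
  constructor
  · intro a ha b hb hab
    simp only [Set.mem_Ici] at ha hb
    dsimp only
    rw [f_eq ha, f_eq hb]
    apply Real.sqrt_le_sqrt
    rcases eq_or_lt_of_le ha with rfl | ha
    · simpa [haux] using haux_nonneg (sq_nonneg b)
    · have hb0 : 0 < b := lt_of_lt_of_le ha hab
      exact haux_mono (Set.mem_Ioi.mpr (by positivity))
        (Set.mem_Ioi.mpr (by positivity)) (by nlinarith)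
  · have hbound : ∀ x ∈ Set.Ioi (0:ℝ),
        x * Real.sqrt (Real.log (1 + 1 / x ^ 2)) ≤ Real.sqrt (2*x) := by
      intro x hx
      have hx : (0:ℝ) < x := hx
      have h1 : Real.log (1 + 1/x^2) ≤ 2/x := by
        have := log_one_add_le (u := 1/x^2) (by positivity)
        have hs : Real.sqrt (1/x^2) = 1/x := by
          rw [one_div, Real.sqrt_inv, Real.sqrt_sq hx.le, one_div]
        rw [hs] at this
        have e : 2*(1/x) = 2/x := by ring
        linarith
      calc x * Real.sqrt (Real.log (1 + 1/x^2))
          ≤ x * Real.sqrt (2/x) := by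
            apply mul_le_mul_of_nonneg_left (Real.sqrt_le_sqrt h1) hx.le
        _ = Real.sqrt (x^2 * (2/x)) := by
            rw [Real.sqrt_mul (by positivity), Real.sqrt_sq hx.le]
        _ = Real.sqrt (2*x) := by congr 1; field_simp
    apply tendsto_of_tendsto_of_tendsto_of_le_of_le'
        (tendsto_const_nhds : Filter.Tendsto (fun _ : ℝ => (0:ℝ)) _ _)
    · have : Filter.Tendsto (fun x : ℝ => Real.sqrt (2*x)) (nhds 0) (nhds 0) := by
        have h : Filter.Tendsto (fun x : ℝ => 2*x) (nhds 0) (nhds 0) := by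
          simpa using (Filter.tendsto_id (x := nhds (0:ℝ))).const_mul 2
        exact (Real.continuous_sqrt.tendsto' 0 0 Real.sqrt_zero).comp h
      exact this.mono_left nhdsWithin_le_nhds
    · filter_upwards [self_mem_nhdsWithin] with x hx
      have hx : (0:ℝ) < x := hx
      positivity
    · filter_upwards [self_mem_nhdsWithin] with x hx
      exact hbound x hx
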